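/- arXiv:2305.05819 — 2 statements merged into one kernel-verified Lean document; each statement's English description precedes it below -/
import Mathlib

section
/- (Key pointwise estimate of Theorem 1.7) Let n ∈ ℕ, A a positive definite symmetric n×n real matrix, and M a positive semidefinite symmetric n×n real matrix. If tr(A·M) ≤ n·(det A)^{1/(n−1)}, then det M ≤ (det A)^{1/(n−1)}. -/
open Matrix Finset

/-- trace of a Hermitian matrix equals sum of eigenvalues (real case). -/
lemma trace_eq_sum_eigenvalues' {n : ℕ} {N : Matrix (Fin n) (Fin n) ℝ}
    (hN : N.IsHermitian) : N.trace = ∑ i, hN.eigenvalues i := by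
  conv_lhs => rw [hN.spectral_theorem]
  rw [Unitary.conjStarAlgAut_apply, Matrix.trace_mul_cycle]
  rw [show (star (hN.eigenvectorUnitary : Matrix (Fin n) (Fin n) ℝ)) *
      (hN.eigenvectorUnitary : Matrix (Fin n) (Fin n) ℝ) = 1 from
    Unitary.coe_star_mul_self _]
  simp [Matrix.trace_diagonal]

/-- AM-GM for psd matrices: det ≤ (trace/n)^n. -/
lemma psd_det_le {n : ℕ} (hn : 0 < n) {N : Matrix (Fin n) (Fin n) ℝ}
    (hN : N.PosSemidef) : N.det ≤ (N.trace / n) ^ n := by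
  have hdet : N.det = ∏ i, hN.1.eigenvalues i := by
    rw [hN.1.det_eq_prod_eigenvalues]; norm_cast
  have htr : N.trace = ∑ i, hN.1.eigenvalues i := trace_eq_sum_eigenvalues' hN.1
  have key := Real.geom_mean_le_arith_mean_weighted Finset.univ
    (fun _ : Fin n => (1 : ℝ) / n) (fun i => hN.1.eigenvalues i)
    (fun i _ => by positivity)
    (by simp [Finset.sum_const]; field_simp)
    (fun i _ => hN.eigenvalues_nonneg i)
  have hprod : (∏ i, hN.1.eigenvalues i ^ ((1 : ℝ) / n)) = N.det ^ ((1 : ℝ) / n) := by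
    rw [hdet, ← Real.finset_prod_rpow _ _ (fun i _ => hN.eigenvalues_nonneg i)]
  have hsum : (∑ i, (1 : ℝ) / n * hN.1.eigenvalues i) = N.trace / n := by
    rw [htr, Finset.sum_div]
    exact Finset.sum_congr rfl fun i _ => by ring
  rw [hprod, hsum] at key
  have hd : (0 : ℝ) ≤ N.det := by
    rw [hdet]; exact Finset.prod_nonneg fun i _ => hN.eigenvalues_nonneg i
  calc N.det = (N.det ^ ((1 : ℝ) / n)) ^ n := by
        rw [← Real.rpow_natCast (N.det ^ ((1 : ℝ)/n)) n, ← Real.rpow_mul hd]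
        rw [one_div, inv_mul_cancel₀ (by exact_mod_cast hn.ne')]
        exact (Real.rpow_one _).symm
    _ ≤ (N.trace / n) ^ n := by
        exact pow_le_pow_left₀ (Real.rpow_nonneg hd _) key n

open scoped MatrixOrder in
theorem stmt_16 (n : ℕ) (hn : 2 ≤ n) (A M : Matrix (Fin n) (Fin n) ℝ)
    (hA : A.PosDef) (hM : M.PosSemidef)
    (htr : (A * M).trace ≤ n * A.det ^ ((1 : ℝ) / (n - 1))) :
    M.det ≤ A.det ^ ((1 : ℝ) / (n - 1)) := by
  have hApsd := hA.posSemidef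
  set S := CFC.sqrt A with hS
  have hSpsd : S.PosSemidef := (CFC.sqrt_nonneg A).posSemidef
  have hSS : S * S = A := CFC.sqrt_mul_sqrt_self A hApsd.nonneg
  have hSH : S.conjTranspose = S := hSpsd.1
  -- N = S M S is psd
  have hN : (S.conjTranspose * M * S).PosSemidef := hM.conjTranspose_mul_mul_same S
  rw [hSH] at hN
  have hnpos : (0 : ℝ) < n := by positivity
  have hn1 : (0 : ℝ) < (n : ℝ) - 1 := by
    have : (2 : ℝ) ≤ n := by exact_mod_cast hn
    linarith
  have hdA : (0 : ℝ) < A.det := hA.det_pos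
  have htrN : (S * M * S).trace = (A * M).trace := by
    rw [Matrix.trace_mul_cycle, hSS]
  have hdetN : (S * M * S).det = A.det * M.det := by
    rw [Matrix.det_mul, Matrix.det_mul, ← hSS, Matrix.det_mul]; ring
  have key := psd_det_le (by omega : 0 < n) hN
  rw [htrN, hdetN] at key
  have htr' : (A * M).trace / n ≤ A.det ^ ((1 : ℝ) / ((n : ℝ) - 1)) := by
    rw [div_le_iff₀ hnpos, mul_comm]
    exact htr
  have htrnn : (0 : ℝ) ≤ (A * M).trace / n := by
    have h0 : (0 : ℝ) ≤ (S * M * S).trace := by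
      rw [trace_eq_sum_eigenvalues' hN.1]
      exact Finset.sum_nonneg fun i _ => hN.eigenvalues_nonneg i
    rw [htrN] at h0
    positivity
  have key2 : A.det * M.det ≤ (A.det ^ ((1 : ℝ) / ((n : ℝ) - 1))) ^ n :=
    key.trans (pow_le_pow_left₀ htrnn htr' n)
  have hrw : (A.det ^ ((1 : ℝ) / ((n : ℝ) - 1))) ^ n
      = A.det * A.det ^ ((1 : ℝ) / ((n : ℝ) - 1)) := by
    rw [← Real.rpow_natCast (A.det ^ ((1 : ℝ)/((n:ℝ)-1))) n, ← Real.rpow_mul hdA.le]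
    have : (1 : ℝ) / ((n : ℝ) - 1) * n = 1 + 1 / ((n : ℝ) - 1) := by
      field_simp
      ring
    rw [this, Real.rpow_add hdA, Real.rpow_one]
  rw [hrw] at key2
  exact le_of_mul_le_mul_left key2 hdA
end

section
/- For n×n real symmetric matrices: if T is positive definite, S is symmetric, and for all t in some nonempty open interval the matrix S − t·B is positive semidefinite and det(T·(S − t·B)) = (tr(T·(S − t·B))/n)^n, where B is symmetric, then for each such t, T·(S − t·B) = λ(t)·I_n for some λ(t) ≥ 0. -/
open Finset Matrix
open scoped MatrixOrder

/-- Equality case of AM-GM for positive reals. -/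
lemma amgm_eq_case (n : ℕ) (hn : 0 < n) (x : Fin n → ℝ) (hx : ∀ i, 0 < x i)
    (h : ∏ i, x i = ((∑ i, x i) / n) ^ n) : ∀ j, x j = (∑ i, x i) / n := by
  have hnR : (0 : ℝ) < n := Nat.cast_pos.mpr hn
  have hsum : 0 < ∑ i, x i := Finset.sum_pos (fun i _ => hx i) (by simp [Finset.univ_nonempty_iff, ← Fin.pos_iff_nonempty, hn])
  have hμ : 0 < (∑ i, x i) / n := div_pos hsum hnR
  have key := (strictConcaveOn_log_Ioi.map_sum_eq_iff (t := Finset.univ)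
    (w := fun _ : Fin n => (n : ℝ)⁻¹) (p := x)
    (fun i _ => by positivity) (by simp [Finset.card_univ]; field_simp)
    (fun i _ => hx i)).mp
  have hsum' : ∑ i, (n : ℝ)⁻¹ • x i = (∑ i, x i) / n := by
    rw [← Finset.smul_sum]; simp [smul_eq_mul, div_eq_inv_mul]
  have hlog : Real.log (∑ i, (n : ℝ)⁻¹ • x i) = ∑ i, (n : ℝ)⁻¹ • Real.log (x i) := by
    rw [hsum']
    have : ∑ i, Real.log (x i) = Real.log (∏ i, x i) := by
      rw [Real.log_prod (fun i _ => (hx i).ne')]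
    have h2 : ∑ i, (n : ℝ)⁻¹ • Real.log (x i) = (n : ℝ)⁻¹ * Real.log (∏ i, x i) := by
      rw [← Finset.smul_sum, this]; rfl
    rw [h2, h, Real.log_pow]
    field_simp
  intro j
  have := key hlog j (Finset.mem_univ j)
  rwa [hsum'] at this

/-- Trace of a real symmetric matrix equals sum of eigenvalues. -/
lemma trace_eq_sum_eig {n : ℕ} {A : Matrix (Fin n) (Fin n) ℝ} (hA : A.IsHermitian) :
    A.trace = ∑ i, hA.eigenvalues i := by
  conv_lhs => rw [hA.spectral_theorem]
  rw [Unitary.conjStarAlgAut_apply, Matrix.trace_mul_cycle]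
  rw [(Matrix.mem_unitaryGroup_iff').mp (hA.eigenvectorUnitary).2]
  simp [Matrix.trace_diagonal]

/-- A hermitian real matrix with constant eigenvalues is scalar. -/
lemma eig_const_scalar {n : ℕ} {A : Matrix (Fin n) (Fin n) ℝ} (hA : A.IsHermitian)
    (μ : ℝ) (h : ∀ i, hA.eigenvalues i = μ) : A = μ • (1 : Matrix (Fin n) (Fin n) ℝ) := by
  have hdiag : Matrix.diagonal (RCLike.ofReal ∘ hA.eigenvalues) =
      μ • (1 : Matrix (Fin n) (Fin n) ℝ) := by
    have : (RCLike.ofReal ∘ hA.eigenvalues : Fin n → ℝ) = fun _ => μ := by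
      funext i; simp [h i]
    rw [this, ← Matrix.smul_one_eq_diagonal]
  conv_lhs => rw [hA.spectral_theorem, hdiag]
  rw [Unitary.conjStarAlgAut_apply, Matrix.mul_smul, Matrix.smul_mul, Matrix.mul_one,
    (Matrix.mem_unitaryGroup_iff).mp (hA.eigenvectorUnitary).2]

/-- Key lemma: equality case of det-trace AM-GM for psd matrices. -/
lemma psd_det_trace_eq {n : ℕ} (hn : 0 < n) {A : Matrix (Fin n) (Fin n) ℝ}
    (hA : A.PosSemidef) (h : A.det = (A.trace / n) ^ n) :
    A = (A.trace / n) • (1 : Matrix (Fin n) (Fin n) ℝ) := by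
  have hH := hA.1
  have htr : A.trace = ∑ i, hH.eigenvalues i := trace_eq_sum_eig hH
  have hdet : A.det = ∏ i, hH.eigenvalues i := by
    have := hH.det_eq_prod_eigenvalues; simpa using this
  have hnonneg : ∀ i, 0 ≤ hH.eigenvalues i := fun i => hA.eigenvalues_nonneg i
  by_cases hpos : ∀ i, 0 < hH.eigenvalues i
  · have := amgm_eq_case n hn hH.eigenvalues hpos (by rw [← hdet, ← htr]; exact h)
    exact eig_const_scalar hH _ (fun i => by rw [this i, htr])
  · push_neg at hpos
    obtain ⟨i0, hi0⟩ := hpos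
    have hz : hH.eigenvalues i0 = 0 := le_antisymm hi0 (hnonneg i0)
    have hdet0 : A.det = 0 := by
      rw [hdet]; exact Finset.prod_eq_zero (Finset.mem_univ i0) hz
    have hμ0 : A.trace / n = 0 := by
      have : (A.trace / n) ^ n = 0 := by rw [← h, hdet0]
      exact pow_eq_zero_iff hn.ne' |>.mp this
    have htr0 : A.trace = 0 := by
      have hnR : (0 : ℝ) < n := Nat.cast_pos.mpr hn
      field_simp at hμ0; simpa using hμ0
    have hall : ∀ i ∈ Finset.univ, hH.eigenvalues i = 0 :=
      (Finset.sum_eq_zero_iff_of_nonneg (fun i _ => hnonneg i)).mp (htr0 ▸ htr.symm)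
    rw [hμ0]
    exact eig_const_scalar hH 0 (fun i => hall i (Finset.mem_univ i))

theorem stmt_18 (n : ℕ) (hn : 0 < n) (T S B : Matrix (Fin n) (Fin n) ℝ)
    (hT : T.PosDef) (hS : S.IsSymm) (hB : B.IsSymm)
    (a b : ℝ) (hab : a < b)
    (hpsd : ∀ t ∈ Set.Ioo a b, (S - t • B).PosSemidef)
    (heq : ∀ t ∈ Set.Ioo a b,
      (T * (S - t • B)).det = ((T * (S - t • B)).trace / n) ^ n) :
    ∀ t ∈ Set.Ioo a b, ∃ l : ℝ, 0 ≤ l ∧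
      T * (S - t • B) = l • (1 : Matrix (Fin n) (Fin n) ℝ) := by
  intro t ht
  set M := S - t • B with hMdef
  have hM : M.PosSemidef := hpsd t ht
  set R := CFC.sqrt T with hRdef
  have hRpsd : R.PosSemidef := Matrix.nonneg_iff_posSemidef.mp (CFC.sqrt_nonneg T)
  have hRR : R * R = T := CFC.sqrt_mul_sqrt_self T hT.posSemidef.nonneg
  have hRsym : Rᴴ = R := hRpsd.1
  set A := R * M * R with hAdef
  have hApsd : A.PosSemidef := by
    have := hM.mul_mul_conjTranspose_same R
    rwa [hRsym] at this
  have htrA : A.trace = (T * M).trace := by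
    rw [hAdef, Matrix.trace_mul_cycle, hRR]
  have hdetA : A.det = (T * M).det := by
    rw [hAdef, Matrix.det_mul, Matrix.det_mul, Matrix.det_mul, ← hRR, Matrix.det_mul]
    ring
  have hAeq : A.det = (A.trace / n) ^ n := by
    rw [hdetA, htrA]; exact heq t ht
  have hkey := psd_det_trace_eq hn hApsd hAeq
  set μ := A.trace / n with hμdef
  have hμnonneg : 0 ≤ μ := by
    have := trace_eq_sum_eig hApsd.1
    have htrnn : 0 ≤ A.trace := by
      rw [this]; exact Finset.sum_nonneg fun i _ => hApsd.eigenvalues_nonneg i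
    exact div_nonneg htrnn (Nat.cast_nonneg n)
  refine ⟨μ, hμnonneg, ?_⟩
  have hdetR : R.det ≠ 0 := by
    intro h0
    have : T.det = R.det * R.det := by rw [← hRR, Matrix.det_mul]
    rw [h0, mul_zero] at this
    exact hT.det_pos.ne' this
  have hRinv : R * R⁻¹ = 1 := Matrix.mul_nonsing_inv R (isUnit_iff_ne_zero.mpr hdetR)
  calc T * M = (R * (R * M * R)) * R⁻¹ := by
        rw [← hRR]
        simp only [Matrix.mul_assoc]
        rw [hRinv, Matrix.mul_one]
    _ = (R * (μ • 1)) * R⁻¹ := by rw [← hAdef, hkey]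
    _ = μ • (1 : Matrix (Fin n) (Fin n) ℝ) := by
        rw [Matrix.mul_smul, Matrix.mul_one, Matrix.smul_mul, hRinv]
end
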